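/- arXiv:2507.02684 — 2 statements merged into one kernel-verified Lean document; each statement's English description precedes it below -/
import Mathlib

section
/- Let A and B be n×n complex matrices. Then ‖A+B‖_F ≤ √((1+√2)/2) · ‖|A|+|B|‖_F, where ‖·‖_F denotes the Frobenius norm. -/
open scoped Matrix ComplexOrder

/-- The absolute value `|A| := (A*A)^{1/2}` of a square complex matrix, i.e. the (unique)
positive semidefinite square root of `Aᴴ * A`. -/
noncomputable def matrixAbs {n : ℕ} (A : Matrix (Fin n) (Fin n) ℂ) :
    Matrix (Fin n) (Fin n) ℂ :=
  open scoped MatrixOrder in CFC.sqrt (Aᴴ * A)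

/-- The Frobenius norm `‖A‖_F = (tr |A|²)^{1/2}` of a square complex matrix. -/
noncomputable def frobeniusNorm' {n : ℕ} (A : Matrix (Fin n) (Fin n) ℂ) : ℝ :=
  Real.sqrt ((matrixAbs A ^ 2).trace.re)

namespace LeeAux

variable {n : ℕ}

/-- Flatten a matrix into a Euclidean space vector. -/
def toEuc (X : Matrix (Fin n) (Fin n) ℂ) : EuclideanSpace ℂ (Fin n × Fin n) :=
  WithLp.toLp 2 (fun p : Fin n × Fin n => X p.1 p.2)

lemma inner_toEuc (X Y : Matrix (Fin n) (Fin n) ℂ) :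
    (inner ℂ (toEuc X) (toEuc Y) : ℂ) = (Xᴴ * Y).trace := by
  simp only [PiLp.inner_apply, RCLike.inner_apply, Matrix.trace, Matrix.diag,
    Matrix.mul_apply, Matrix.conjTranspose_apply, toEuc]
  rw [Fintype.sum_prod_type]
  rw [Finset.sum_comm]
  exact Finset.sum_congr rfl fun _ _ => Finset.sum_congr rfl fun _ _ => mul_comm _ _


lemma etr_eq_norm_sq (X : Matrix (Fin n) (Fin n) ℂ) :
    ((Xᴴ * X).trace).re = ‖toEuc X‖ ^ 2 := by
  rw [← inner_toEuc, ← @inner_self_eq_norm_sq ℂ]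
  rfl

lemma etr_nonneg (X : Matrix (Fin n) (Fin n) ℂ) : 0 ≤ ((Xᴴ * X).trace).re := by
  rw [etr_eq_norm_sq]; positivity

lemma sqrt_etr (X : Matrix (Fin n) (Fin n) ℂ) :
    Real.sqrt ((Xᴴ * X).trace).re = ‖toEuc X‖ := by
  rw [etr_eq_norm_sq, Real.sqrt_sq (norm_nonneg _)]

/-- Cauchy–Schwarz for the Frobenius trace inner product. -/
lemma trace_CS (X Y : Matrix (Fin n) (Fin n) ℂ) :
    ((Xᴴ * Y).trace).re ≤
      Real.sqrt ((Xᴴ * X).trace).re * Real.sqrt ((Yᴴ * Y).trace).re := by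
  rw [sqrt_etr, sqrt_etr, ← inner_toEuc]
  calc (inner ℂ (toEuc X) (toEuc Y) : ℂ).re ≤ ‖(inner ℂ (toEuc X) (toEuc Y) : ℂ)‖ :=
        Complex.re_le_norm _
    _ ≤ ‖toEuc X‖ * ‖toEuc Y‖ := norm_inner_le_norm _ _


/-- Polar decomposition for square complex matrices. -/
lemma exists_polar (M : Matrix (Fin n) (Fin n) ℂ)
    {P : Matrix (Fin n) (Fin n) ℂ} (hP : P.PosSemidef) (hMP : Mᴴ * M = P * P) :
    ∃ U : Matrix (Fin n) (Fin n) ℂ, U * Uᴴ = 1 ∧ Uᴴ * U = 1 ∧ M = U * P := by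
  classical
  have hH : P.IsHermitian := hP.1
  set V : Matrix (Fin n) (Fin n) ℂ := (hH.eigenvectorUnitary : Matrix (Fin n) (Fin n) ℂ) with hVdef
  set d : Fin n → ℝ := hH.eigenvalues with hddef
  have hd0 : ∀ j, 0 ≤ d j := hP.eigenvalues_nonneg
  set D : Matrix (Fin n) (Fin n) ℂ := Matrix.diagonal (fun j => (d j : ℂ)) with hDdef
  have hVV : Vᴴ * V = 1 := by
    have := (Matrix.mem_unitaryGroup_iff').mp hH.eigenvectorUnitary.2
    simpa [Matrix.star_eq_conjTranspose] using this
  have hVV' : V * Vᴴ = 1 := by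
    have := (Matrix.mem_unitaryGroup_iff).mp hH.eigenvectorUnitary.2
    simpa [Matrix.star_eq_conjTranspose] using this
  have hspec : P = V * D * Vᴴ := by
    have := hH.spectral_theorem
    rw [this]; rfl
  have h1 : ∀ X, Vᴴ * (V * X) = X := fun X => by
    rw [← Matrix.mul_assoc, hVV, Matrix.one_mul]
  have h2 : ∀ X, V * (Vᴴ * X) = X := fun X => by
    rw [← Matrix.mul_assoc, hVV', Matrix.one_mul]
  set C : Matrix (Fin n) (Fin n) ℂ := M * V with hCdef
  have hCC : Cᴴ * C = D * D := by
    have e1 : Cᴴ * C = Vᴴ * (Mᴴ * M) * V := by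
      simp [hCdef, Matrix.conjTranspose_mul, Matrix.mul_assoc]
    rw [e1, hMP, hspec]
    simp only [Matrix.mul_assoc, h1, h2, hVV, Matrix.mul_one]
  -- columns with zero eigenvalue vanish
  have hCzero : ∀ j, d j = 0 → ∀ i, C i j = 0 := by
    intro j hj i
    have hdiag : (Cᴴ * C) j j = 0 := by
      rw [hCC]
      simp [hDdef, Matrix.mul_apply, Matrix.diagonal, hj]
    have hsum : ∑ i, Complex.normSq (C i j) = 0 := by
      have e : ((Cᴴ * C) j j) = ((∑ i, Complex.normSq (C i j) : ℝ) : ℂ) := by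
        push_cast
        simp [Matrix.mul_apply, Matrix.conjTranspose_apply, Complex.normSq_eq_conj_mul_self]
      have := e.symm.trans hdiag
      exact_mod_cast this
    have := (Finset.sum_eq_zero_iff_of_nonneg
      (fun i _ => Complex.normSq_nonneg (C i j))).mp hsum i (Finset.mem_univ i)
    exact Complex.normSq_eq_zero.mp this
  -- the orthonormal family of normalized columns
  set v : Fin n → EuclideanSpace ℂ (Fin n) := fun j => WithLp.toLp 2 (((d j : ℂ)⁻¹) • (fun i => C i j))
    with hvdef
  set s : Set (Fin n) := {j | d j ≠ 0} with hsdef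
  have hv : Orthonormal ℂ (s.restrict v) := by
    rw [orthonormal_iff_ite]
    rintro ⟨j, hj⟩ ⟨k, hk⟩
    have hinner : (inner ℂ (v j) (v k) : ℂ) =
        (starRingEnd ℂ) ((d j : ℂ)⁻¹) * ((d k : ℂ)⁻¹) * (Cᴴ * C) j k := by
      simp [hvdef, PiLp.inner_apply, RCLike.inner_apply, Matrix.mul_apply,
        Matrix.conjTranspose_apply, Finset.mul_sum, mul_comm, mul_left_comm, mul_assoc]
    have hstar : (starRingEnd ℂ) ((d j : ℂ)⁻¹) = (d j : ℂ)⁻¹ := by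
      simp
    change inner ℂ (v j) (v k) = if (⟨j, hj⟩ : s) = ⟨k, hk⟩ then 1 else 0
    by_cases hjk : j = k
    · subst hjk
      simp only [Set.restrict_apply, hinner, hstar, hCC]
      have : (D * D) j j = ((d j : ℂ))^2 := by
        simp [hDdef, Matrix.mul_apply, Matrix.diagonal, sq]
      rw [this]
      have hdj : (d j : ℂ) ≠ 0 := by exact_mod_cast hj
      field_simp [sq]
      simp
    · have : (D * D) j k = 0 := by
        simp [hDdef, Matrix.mul_apply, Matrix.diagonal, hjk]
      simp only [Set.restrict_apply, hinner, hCC, this, mul_zero]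
      simp [Subtype.ext_iff, hjk]
  obtain ⟨b, hb⟩ := hv.exists_orthonormalBasis_extension_of_card_eq
    (by simp [finrank_euclideanSpace])
  set Bm : Matrix (Fin n) (Fin n) ℂ := Matrix.of (fun i j => b j i) with hBdef
  have hBB : Bmᴴ * Bm = 1 := by
    ext j k
    have := (orthonormal_iff_ite.mp b.orthonormal) j k
    simp only [Matrix.mul_apply, Matrix.conjTranspose_apply, hBdef, Matrix.of_apply,
      Matrix.one_apply]
    rw [← this]
    simp [PiLp.inner_apply, RCLike.inner_apply, mul_comm]
  have hBB' : Bm * Bmᴴ = 1 := mul_eq_one_comm.mp hBB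
  have hBD : Bm * D = C := by
    ext i j
    rw [Matrix.mul_diagonal]
    by_cases hj : d j = 0
    · simp [hj, hCzero j hj i]
    · have hbj : b j = v j := hb j hj
      have : Bm i j = (d j : ℂ)⁻¹ * C i j := by
        simp [hBdef, hbj, hvdef]
      rw [this]
      have hdj : (d j : ℂ) ≠ 0 := by exact_mod_cast hj
      field_simp
  refine ⟨Bm * Vᴴ, ?_, ?_, ?_⟩
  · simp only [Matrix.conjTranspose_mul, Matrix.conjTranspose_conjTranspose, Matrix.mul_assoc]
    rw [h1, hBB']
  · simp only [Matrix.conjTranspose_mul, Matrix.conjTranspose_conjTranspose, Matrix.mul_assoc]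
    rw [← Matrix.mul_assoc Bmᴴ, hBB, Matrix.one_mul, hVV']
  · rw [hspec]
    simp only [Matrix.mul_assoc, h1]
    rw [← Matrix.mul_assoc, hBD, hCdef, Matrix.mul_assoc, hVV', Matrix.mul_one]


set_option maxHeartbeats 1000000 in
/-- Core trace inequality, with everything abstract. -/
theorem core_ineq {n : ℕ} (A B P Q Ph Qh U Vm : Matrix (Fin n) (Fin n) ℂ)
    (hPH : Pᴴ = P) (hQH : Qᴴ = Q) (hPhH : Phᴴ = Ph) (hQhH : Qhᴴ = Qh)
    (hPh2 : Ph * Ph = P) (hQh2 : Qh * Qh = Q)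
    (hU1 : U * Uᴴ = 1) (hV2 : Vmᴴ * Vm = 1)
    (hUA : A = U * P) (hVB : B = Vm * Q) :
    (((A + B)ᴴ * (A + B)).trace).re ≤
      (1 + Real.sqrt 2) / 2 * (((P + Q)ᴴ * (P + Q)).trace).re := by
  set W : Matrix (Fin n) (Fin n) ℂ := Vmᴴ * U with hWdef
  have hWW : W * Wᴴ = 1 := by
    rw [hWdef, Matrix.conjTranspose_mul, Matrix.conjTranspose_conjTranspose,
      Matrix.mul_assoc, ← Matrix.mul_assoc U, hU1, Matrix.one_mul, hV2]
  set X : Matrix (Fin n) (Fin n) ℂ := Qh * W * Ph with hXdef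
  set Y : Matrix (Fin n) (Fin n) ℂ := Qh * Ph with hYdef
  set r : ℝ := ((Bᴴ * A).trace).re with hrdef
  set a : ℝ := ((P * P).trace).re with hadef
  set b : ℝ := ((Q * Q).trace).re with hbdef
  set p : ℝ := ((P * Q).trace).re with hpdef
  have ha0 : 0 ≤ a := by
    have := etr_nonneg P
    rwa [hPH] at this
  have hb0 : 0 ≤ b := by
    have := etr_nonneg Q
    rwa [hQH] at this
  have hq2 : ∀ Z, Qh * (Qh * Z) = Q * Z := fun Z => by
    rw [← Matrix.mul_assoc, hQh2]
  have hW2 : ∀ Z, W * (Wᴴ * Z) = Z := fun Z => by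
    rw [← Matrix.mul_assoc, hWW, Matrix.one_mul]
  have hYY : (Yᴴ * Y).trace = (P * Q).trace := by
    have e1 : Yᴴ * Y = Ph * (Q * Ph) := by
      rw [hYdef]
      simp only [Matrix.conjTranspose_mul, hPhH, hQhH, Matrix.mul_assoc, hq2]
    rw [e1, Matrix.trace_mul_comm Ph (Q * Ph), Matrix.mul_assoc, hPh2,
      Matrix.trace_mul_comm Q P]
  have hp0 : 0 ≤ p := by
    have := etr_nonneg Y
    rwa [hYY] at this
  have htr1 : (Bᴴ * A).trace = (Yᴴ * X).trace := by
    have e1 : Yᴴ * X = Ph * (Q * (W * Ph)) := by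
      rw [hYdef, hXdef]
      simp only [Matrix.conjTranspose_mul, hPhH, hQhH, Matrix.mul_assoc, hq2]
    have e2 : Bᴴ * A = Q * (W * P) := by
      rw [hUA, hVB]
      simp only [Matrix.conjTranspose_mul, hQH, Matrix.mul_assoc, hWdef]
    have e3 : Q * (W * Ph) * Ph = Q * (W * P) := by
      simp only [Matrix.mul_assoc, hPh2]
    rw [e1, e2, Matrix.trace_mul_comm Ph (Q * (W * Ph)), e3]
  have hCS1 : r ≤ Real.sqrt (((Yᴴ * Y).trace).re) * Real.sqrt (((Xᴴ * X).trace).re) := by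
    rw [hrdef, htr1]
    exact trace_CS Y X
  set M : Matrix (Fin n) (Fin n) ℂ := Wᴴ * Q * W with hMdef
  have hMH : Mᴴ = M := by
    simp only [hMdef, Matrix.conjTranspose_mul, Matrix.conjTranspose_conjTranspose, hQH,
      Matrix.mul_assoc]
  have hXX : (Xᴴ * X).trace = (Mᴴ * P).trace := by
    have e1 : Xᴴ * X = Ph * (Wᴴ * (Q * (W * Ph))) := by
      rw [hXdef]
      simp only [Matrix.conjTranspose_mul, hPhH, hQhH, Matrix.mul_assoc, hq2]
    have e4 : Wᴴ * (Q * (W * Ph)) * Ph = Mᴴ * P := by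
      rw [hMH]
      simp only [hMdef, Matrix.mul_assoc, hPh2]
    rw [e1, Matrix.trace_mul_comm Ph (Wᴴ * (Q * (W * Ph))), e4]
  have hMM : (Mᴴ * M).trace = (Q * Q).trace := by
    have e1 : M * M = Wᴴ * (Q * (Q * W)) := by
      simp only [hMdef, Matrix.mul_assoc, hW2]
    have e2 : Q * (Q * W) * Wᴴ = Q * Q := by
      simp only [Matrix.mul_assoc, hWW, Matrix.mul_one]
    rw [hMH, e1, Matrix.trace_mul_comm Wᴴ (Q * (Q * W)), e2]
  have hXXle : ((Xᴴ * X).trace).re ≤ Real.sqrt b * Real.sqrt a := by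
    rw [hXX]
    calc ((Mᴴ * P).trace).re
        ≤ Real.sqrt (((Mᴴ * M).trace).re) * Real.sqrt (((Pᴴ * P).trace).re) :=
          trace_CS M P
      _ = Real.sqrt b * Real.sqrt a := by rw [hMM, hPH]
  have hr : r ≤ Real.sqrt p * Real.sqrt (Real.sqrt b * Real.sqrt a) := by
    refine hCS1.trans ?_
    rw [hYY]
    exact mul_le_mul_of_nonneg_left (Real.sqrt_le_sqrt hXXle) (Real.sqrt_nonneg _)
  have hU2' : Uᴴ * U = 1 := mul_eq_one_comm.mp hU1
  have hlhs : (((A + B)ᴴ * (A + B)).trace).re = a + b + 2 * r := by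
    have e : (A + B)ᴴ * (A + B) = Aᴴ * A + (Aᴴ * B + (Bᴴ * A + Bᴴ * B)) := by
      rw [Matrix.conjTranspose_add, Matrix.add_mul, Matrix.mul_add, Matrix.mul_add, add_assoc]
    have hPP : Aᴴ * A = P * P := by
      rw [hUA, Matrix.conjTranspose_mul, Matrix.mul_assoc, ← Matrix.mul_assoc Uᴴ U P, hU2',
        Matrix.one_mul, hPH]
    have hQQ : Bᴴ * B = Q * Q := by
      rw [hVB, Matrix.conjTranspose_mul, Matrix.mul_assoc, ← Matrix.mul_assoc Vmᴴ Vm Q, hV2,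
        Matrix.one_mul, hQH]
    have hAB : ((Aᴴ * B).trace).re = r := by
      have e2 : (Aᴴ * B).trace = star ((Bᴴ * A).trace) := by
        rw [← Matrix.trace_conjTranspose, Matrix.conjTranspose_mul,
          Matrix.conjTranspose_conjTranspose]
      rw [e2, hrdef, Complex.star_def, Complex.conj_re]
    rw [e]
    simp only [Matrix.trace_add, Complex.add_re]
    rw [hPP, hQQ, hAB]
    ring
  have hrhs : (((P + Q)ᴴ * (P + Q)).trace).re = a + b + 2 * p := by
    have e : (P + Q)ᴴ * (P + Q) = P * P + (P * Q + (Q * P + Q * Q)) := by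
      rw [Matrix.conjTranspose_add, hPH, hQH, Matrix.add_mul, Matrix.mul_add, Matrix.mul_add,
        add_assoc]
    rw [e]
    simp only [Matrix.trace_add, Complex.add_re]
    rw [Matrix.trace_mul_comm Q P]
    ring
  have key : a + b + 2 * r ≤ (1 + Real.sqrt 2) / 2 * (a + b + 2 * p) := by
    set s2 := Real.sqrt 2 with hs2def
    have hs2 : s2 ^ 2 = 2 := Real.sq_sqrt (by norm_num)
    have hs21 : 1 ≤ s2 := by nlinarith [Real.sqrt_nonneg 2]
    set u := Real.sqrt (Real.sqrt b * Real.sqrt a) with hudef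
    set v := Real.sqrt p with hvdef
    have hu0 : 0 ≤ u := Real.sqrt_nonneg _
    have hv0 : 0 ≤ v := Real.sqrt_nonneg _
    have hu2 : u ^ 2 = Real.sqrt b * Real.sqrt a :=
      Real.sq_sqrt (mul_nonneg (Real.sqrt_nonneg _) (Real.sqrt_nonneg _))
    have hv2 : v ^ 2 = p := Real.sq_sqrt hp0
    have hsa : Real.sqrt a ^ 2 = a := Real.sq_sqrt ha0
    have hsb : Real.sqrt b ^ 2 = b := Real.sq_sqrt hb0
    have huab : u ^ 2 ≤ (a + b) / 2 := by
      rw [hu2]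
      nlinarith [sq_nonneg (Real.sqrt a - Real.sqrt b)]
    have hrv : r ≤ v * u := hr
    have h1 : (s2 - 1) * u ^ 2 ≤ (s2 - 1) * ((a + b) / 2) :=
      mul_le_mul_of_nonneg_left huab (by linarith)
    have h5 : (s2 + 1) * ((s2 - 1) * u - v) ^ 2
        = (s2 - 1) * u ^ 2 - 2 * (u * v) + (s2 + 1) * v ^ 2 := by
      linear_combination ((s2 - 1) * u ^ 2 - 2 * (u * v)) * hs2
    have h4 : 0 ≤ (s2 - 1) * u ^ 2 - 2 * (u * v) + (s2 + 1) * v ^ 2 := by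
      rw [← h5]
      exact mul_nonneg (by linarith) (sq_nonneg _)
    have h6 : (s2 + 1) * v ^ 2 = (s2 + 1) * p := by rw [hv2]
    nlinarith [h1, h4, h6, hrv]
  rw [hlhs, hrhs]
  exact key

open scoped MatrixOrder in
lemma abs_sq (M : Matrix (Fin n) (Fin n) ℂ) : matrixAbs M ^ 2 = Mᴴ * M :=
  CFC.sq_sqrt _ (Matrix.nonneg_iff_posSemidef.mpr (Matrix.posSemidef_conjTranspose_mul_self M))

open scoped MatrixOrder in
lemma abs_mul_self (M : Matrix (Fin n) (Fin n) ℂ) : matrixAbs M * matrixAbs M = Mᴴ * M :=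
  CFC.sqrt_mul_sqrt_self _
    (Matrix.nonneg_iff_posSemidef.mpr (Matrix.posSemidef_conjTranspose_mul_self M))

open scoped MatrixOrder in
lemma abs_psd (M : Matrix (Fin n) (Fin n) ℂ) : (matrixAbs M).PosSemidef :=
  Matrix.nonneg_iff_posSemidef.mp (CFC.sqrt_nonneg _)

open scoped MatrixOrder in
lemma psd_sqrt {P : Matrix (Fin n) (Fin n) ℂ} (hP : P.PosSemidef) :
    ∃ R : Matrix (Fin n) (Fin n) ℂ, R.PosSemidef ∧ R * R = P :=
  ⟨CFC.sqrt P, Matrix.nonneg_iff_posSemidef.mp (CFC.sqrt_nonneg P),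
    CFC.sqrt_mul_sqrt_self P (Matrix.nonneg_iff_posSemidef.mpr hP)⟩

end LeeAux

/-- **Lee's conjecture (Lin–Zhang theorem):** for all `n × n` complex matrices `A, B`,
`‖A + B‖_F ≤ √((1 + √2)/2) · ‖|A| + |B|‖_F`. -/
theorem frobenius_norm_add_le {n : ℕ} (A B : Matrix (Fin n) (Fin n) ℂ) :
    frobeniusNorm' (A + B) ≤
      Real.sqrt ((1 + Real.sqrt 2) / 2) * frobeniusNorm' (matrixAbs A + matrixAbs B) := by
  classical
  have hfr : ∀ M : Matrix (Fin n) (Fin n) ℂ,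
      frobeniusNorm' M = Real.sqrt (((Mᴴ * M).trace).re) := by
    intro M
    unfold frobeniusNorm'
    rw [LeeAux.abs_sq M]
  have hP : (matrixAbs A).PosSemidef :=
    LeeAux.abs_psd A
  have hQ : (matrixAbs B).PosSemidef :=
    LeeAux.abs_psd B
  have hPP : Aᴴ * A = matrixAbs A * matrixAbs A :=
    (LeeAux.abs_mul_self A).symm
  have hQQ : Bᴴ * B = matrixAbs B * matrixAbs B :=
    (LeeAux.abs_mul_self B).symm
  obtain ⟨U, hU1, hU2, hUA⟩ := LeeAux.exists_polar A hP hPP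
  obtain ⟨Vm, hV1, hV2, hVB⟩ := LeeAux.exists_polar B hQ hQQ
  obtain ⟨Ph, hPh, hPh2⟩ := LeeAux.psd_sqrt hP
  obtain ⟨Qh, hQh, hQh2⟩ := LeeAux.psd_sqrt hQ
  have key := LeeAux.core_ineq A B (matrixAbs A) (matrixAbs B) Ph Qh U Vm
    hP.1 hQ.1 hPh.1 hQh.1
    hPh2 hQh2 hU1 hV2 hUA hVB
  rw [hfr, hfr]
  refine (Real.sqrt_le_sqrt key).trans_eq ?_
  rw [Real.sqrt_mul (by positivity)]
end

section
/- Let X and Y be n×n positive semidefinite complex matrices, and let Q be an n×n complex matrix that is a contraction, i.e., its operator norm satisfies ‖Q‖ ≤ 1 (equivalently, s₁(Q) ≤ 1). Then for every real t > 0, 4·|tr(QXY)| ≤ t·tr(X² + Y²) + (1/t)·tr(XY + YX). -/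
open scoped Matrix ComplexOrder Matrix.Norms.L2Operator MatrixOrder

open Matrix in
private lemma aux_trace_re_nonneg {n : ℕ} {A : Matrix (Fin n) (Fin n) ℂ} (hA : A.PosSemidef) :
    0 ≤ A.trace.re := by
  have h : ∀ i, 0 ≤ (A i i).re := by
    intro i
    have := hA.re_dotProduct_nonneg (Pi.single i 1)
    simpa [Matrix.mulVec_single, ← Pi.single_star, single_dotProduct] using this
  rw [Matrix.trace]
  simp only [Complex.re_sum]
  exact Finset.sum_nonneg fun i _ => h i

open Matrix in
private lemma aux_trace_mul_re_nonneg {n : ℕ} {S T : Matrix (Fin n) (Fin n) ℂ}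
    (hS : S.PosSemidef) (hT : T.PosSemidef) : 0 ≤ ((S * T).trace).re := by
  have hC := (CFC.sqrt_nonneg S).posSemidef
  have hCh : (CFC.sqrt S)ᴴ = CFC.sqrt S := hC.1
  have key : (S * T).trace = (CFC.sqrt S * T * (CFC.sqrt S)ᴴ).trace := by
    rw [hCh, Matrix.trace_mul_cycle, CFC.sqrt_mul_sqrt_self S hS.nonneg]
  rw [key]
  exact aux_trace_re_nonneg (hT.mul_mul_conjTranspose_same (CFC.sqrt S))

open Matrix in
private lemma aux_tr_expand {n : ℕ} (M P : Matrix (Fin n) (Fin n) ℂ) :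
    (Mᴴ * P).trace = ∑ p : Fin n × Fin n, (starRingEnd ℂ) (M p.1 p.2) * P p.1 p.2 := by
  rw [Matrix.trace, Fintype.sum_prod_type]
  simp only [Matrix.diag_apply, Matrix.mul_apply, Matrix.conjTranspose_apply, RCLike.star_def]
  rw [Finset.sum_comm]

open Matrix in
private lemma aux_cauchy_schwarz {n : ℕ} (M N : Matrix (Fin n) (Fin n) ℂ) :
    ‖(Mᴴ * N).trace‖ ≤
      Real.sqrt ((Mᴴ * M).trace.re) * Real.sqrt ((Nᴴ * N).trace.re) := by
  classical
  let f : EuclideanSpace ℂ (Fin n × Fin n) := WithLp.toLp 2 (fun p : Fin n × Fin n => M p.1 p.2)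
  let g : EuclideanSpace ℂ (Fin n × Fin n) := WithLp.toLp 2 (fun p : Fin n × Fin n => N p.1 p.2)
  have hinner : (Mᴴ * N).trace = inner (𝕜 := ℂ) f g := by
    rw [aux_tr_expand, PiLp.inner_apply]
    simp [f, g, RCLike.inner_apply, mul_comm]
  have hnorm : ∀ (P : Matrix (Fin n) (Fin n) ℂ) (h : EuclideanSpace ℂ (Fin n × Fin n)),
      (∀ p, h p = P p.1 p.2) → (Pᴴ * P).trace.re = ‖h‖ ^ 2 := by
    intro P h hh
    rw [aux_tr_expand, EuclideanSpace.norm_eq, Real.sq_sqrt (by positivity), Complex.re_sum]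
    congr 1; ext p
    simp [hh, Complex.conj_mul', ← Complex.ofReal_pow]
  have hf := hnorm M f fun p => rfl
  have hg := hnorm N g fun p => rfl
  rw [hinner, hf, hg, Real.sqrt_sq (norm_nonneg f), Real.sqrt_sq (norm_nonneg g)]
  exact norm_inner_le_norm f g

open Matrix in
private lemma aux_one_sub_posSemidef {n : ℕ} (Q : Matrix (Fin n) (Fin n) ℂ) (hQ : ‖Q‖ ≤ 1) :
    (1 - Qᴴ * Q).PosSemidef := by
  refine Matrix.PosSemidef.of_dotProduct_mulVec_nonneg ?_ ?_
  · simp [Matrix.IsHermitian, Matrix.conjTranspose_sub, Matrix.conjTranspose_mul]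
  · intro x
    have hx : star x ⬝ᵥ ((1 - Qᴴ * Q) *ᵥ x)
        = (star x ⬝ᵥ x) - (star (Q *ᵥ x) ⬝ᵥ (Q *ᵥ x)) := by
      rw [Matrix.sub_mulVec, Matrix.one_mulVec, dotProduct_sub]
      congr 1
      rw [← Matrix.mulVec_mulVec, Matrix.dotProduct_mulVec, ← Matrix.star_mulVec]
    have hvv : ∀ v : Fin n → ℂ, star v ⬝ᵥ v
        = ((‖(EuclideanSpace.equiv (Fin n) ℂ).symm v‖ ^ 2 : ℝ) : ℂ) := by
      intro v
      rw [dotProduct, EuclideanSpace.norm_eq, Real.sq_sqrt (by positivity)]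
      push_cast
      congr 1; ext i
      simp [Complex.conj_mul', ← Complex.ofReal_pow]
    rw [hx, hvv, hvv, ← Complex.ofReal_sub]
    rw [Complex.zero_le_real]
    have h1 : ‖(EuclideanSpace.equiv (Fin n) ℂ).symm (Q *ᵥ x)‖
        ≤ ‖(EuclideanSpace.equiv (Fin n) ℂ).symm x‖ := by
      calc ‖(EuclideanSpace.equiv (Fin n) ℂ).symm (Q *ᵥ x)‖
          ≤ ‖Q‖ * ‖(EuclideanSpace.equiv (Fin n) ℂ).symm x‖ :=
            Matrix.l2_opNorm_mulVec Q ((EuclideanSpace.equiv (Fin n) ℂ).symm x)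
        _ ≤ 1 * ‖(EuclideanSpace.equiv (Fin n) ℂ).symm x‖ :=
            mul_le_mul_of_nonneg_right hQ (norm_nonneg _)
        _ = _ := one_mul _
    have := sq_le_sq'
      (by linarith [norm_nonneg ((EuclideanSpace.equiv (Fin n) ℂ).symm (Q *ᵥ x))]) h1
    linarith

set_option maxHeartbeats 1000000 in
/-- **Lemma 2:** If `X, Y` are `n × n` positive semidefinite complex matrices and `Q` is a
contraction (operator norm `‖Q‖ ≤ 1`, equivalently `s₁(Q) ≤ 1`), then for every real `t > 0`,
`4·|tr(QXY)| ≤ t·tr(X² + Y²) + (1/t)·tr(XY + YX)`. -/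
theorem four_mul_abs_trace_contraction_mul_le {n : ℕ}
    (X Y Q : Matrix (Fin n) (Fin n) ℂ)
    (hX : X.PosSemidef) (hY : Y.PosSemidef) (hQ : ‖Q‖ ≤ 1)
    (t : ℝ) (ht : 0 < t) :
    4 * ‖(Q * X * Y).trace‖ ≤
      t * (X ^ 2 + Y ^ 2).trace.re + (1 / t) * (X * Y + Y * X).trace.re := by
  set A := CFC.sqrt X with hAdef
  set B := CFC.sqrt Y with hBdef
  have hA := Matrix.nonneg_iff_posSemidef.mp (CFC.sqrt_nonneg X)
  have hB := Matrix.nonneg_iff_posSemidef.mp (CFC.sqrt_nonneg Y)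
  have hAh : Aᴴ = A := hA.1
  have hBh : Bᴴ = B := hB.1
  have hAX : A * A = X := CFC.sqrt_mul_sqrt_self X hX.nonneg
  have hBY : B * B = Y := CFC.sqrt_mul_sqrt_self Y hY.nonneg
  have tr_sand : ∀ Z W : Matrix (Fin n) (Fin n) ℂ,
      (W * Z * W).trace = (Z * (W * W)).trace := by
    intro Z W
    rw [Matrix.trace_mul_cycle, Matrix.trace_mul_comm]
  set M := A * Qᴴ * B with hMdef
  set N := A * B with hNdef
  set R := Q * X * Qᴴ with hRdef
  have hMH : Mᴴ = B * Q * A := by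
    simp [hMdef, Matrix.conjTranspose_mul, hAh, hBh, Matrix.mul_assoc]
  have hNH : Nᴴ = B * A := by
    simp [hNdef, Matrix.conjTranspose_mul, hAh, hBh]
  have e1 : (Mᴴ * N).trace = (Q * X * Y).trace := by
    rw [hMH, hNdef]
    have h' : B * Q * A * (A * B) = B * (Q * X) * B := by
      rw [← hAX]; simp only [Matrix.mul_assoc]
    rw [h', tr_sand, hBY, Matrix.mul_assoc]
  have e2 : (Mᴴ * M).trace = (R * Y).trace := by
    rw [hMH, hMdef, hRdef]
    have h' : B * Q * A * (A * Qᴴ * B) = B * (Q * X * Qᴴ) * B := by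
      rw [← hAX]; simp only [Matrix.mul_assoc]
    rw [h', tr_sand, hBY]
  have e3 : (Nᴴ * N).trace = (X * Y).trace := by
    rw [hNH, hNdef]
    have h' : B * A * (A * B) = B * X * B := by
      rw [← hAX]; simp only [Matrix.mul_assoc]
    rw [h', tr_sand, hBY]
  have hR : R.PosSemidef := hX.mul_mul_conjTranspose_same Q
  have hRh : Rᴴ = R := hR.1
  have ha : 0 ≤ (R * Y).trace.re := aux_trace_mul_re_nonneg hR hY
  have hb : 0 ≤ (X * Y).trace.re := aux_trace_mul_re_nonneg hX hY
  have cs : ‖(Q * X * Y).trace‖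
      ≤ Real.sqrt ((R * Y).trace.re) * Real.sqrt ((X * Y).trace.re) := by
    have h := aux_cauchy_schwarz M N
    rwa [e1, e2, e3] at h
  -- (i) 2 tr(RY) ≤ tr(RR) + tr(YY)
  have h0 : 0 ≤ (((R - Y) * (R - Y)).trace).re := by
    have h := Matrix.posSemidef_conjTranspose_mul_self (R - Y)
    rw [Matrix.conjTranspose_sub, hRh, hY.1] at h
    exact aux_trace_re_nonneg h
  have hi : 2 * (R * Y).trace.re ≤ (R * R).trace.re + (Y * Y).trace.re := by
    have hexp : (R - Y) * (R - Y) = R * R - (R * Y + Y * R) + Y * Y := by noncomm_ring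
    rw [hexp, Matrix.trace_add, Matrix.trace_sub, Matrix.trace_add,
      Matrix.trace_mul_comm Y R] at h0
    simp only [Complex.add_re, Complex.sub_re] at h0
    linarith
  -- (ii) tr(RR) ≤ tr(XX)
  have hQQ := Matrix.posSemidef_conjTranspose_mul_self Q
  have hP1 := aux_one_sub_posSemidef Q hQ
  have hXPX : (X * (Qᴴ * Q) * X).PosSemidef := by
    have h := hQQ.mul_mul_conjTranspose_same X
    rwa [hX.1] at h
  have hXX : (X * X).PosSemidef := by
    have h := Matrix.posSemidef_conjTranspose_mul_self X
    rwa [hX.1] at h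
  have u1 : (R * R).trace = ((X * (Qᴴ * Q) * X) * (Qᴴ * Q)).trace := by
    have m1 : Q * X * Qᴴ * (Q * X * Qᴴ) = Q * (X * (Qᴴ * Q) * X * Qᴴ) := by
      simp only [Matrix.mul_assoc]
    have m2 : X * (Qᴴ * Q) * X * Qᴴ * Q = (X * (Qᴴ * Q) * X) * (Qᴴ * Q) := by
      simp only [Matrix.mul_assoc]
    calc (R * R).trace = (Q * (X * (Qᴴ * Q) * X * Qᴴ)).trace := by rw [hRdef, m1]
      _ = ((X * (Qᴴ * Q) * X * Qᴴ) * Q).trace := Matrix.trace_mul_comm _ _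
      _ = ((X * (Qᴴ * Q) * X) * (Qᴴ * Q)).trace := by rw [Matrix.mul_assoc (X * (Qᴴ * Q) * X) Qᴴ Q]
  have u2 : 0 ≤ ((X * (Qᴴ * Q) * X) * (1 - Qᴴ * Q)).trace.re :=
    aux_trace_mul_re_nonneg hXPX hP1
  have u3 : (X * (Qᴴ * Q) * X).trace = ((X * X) * (Qᴴ * Q)).trace :=
    Matrix.trace_mul_cycle X (Qᴴ * Q) X
  have u4 : 0 ≤ ((X * X) * (1 - Qᴴ * Q)).trace.re := aux_trace_mul_re_nonneg hXX hP1
  have hii : (R * R).trace.re ≤ (X * X).trace.re := by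
    have e5 : (X * (Qᴴ * Q) * X) * (1 - Qᴴ * Q)
        = X * (Qᴴ * Q) * X - (X * (Qᴴ * Q) * X) * (Qᴴ * Q) := by noncomm_ring
    have e6 : (X * X) * (1 - Qᴴ * Q) = X * X - (X * X) * (Qᴴ * Q) := by noncomm_ring
    rw [e5, Matrix.trace_sub] at u2
    rw [e6, Matrix.trace_sub] at u4
    simp only [Complex.sub_re] at u2 u4
    linarith [congrArg Complex.re u1, congrArg Complex.re u3]
  -- rewrite the goal
  have hYX : (Y * X).trace = (X * Y).trace := Matrix.trace_mul_comm Y X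
  rw [pow_two, pow_two, Matrix.trace_add, Matrix.trace_add, hYX]
  simp only [Complex.add_re]
  set a := (R * Y).trace.re
  set b := (X * Y).trace.re
  set x2 := (X * X).trace.re
  set y2 := (Y * Y).trace.re
  have hcs4 : 4 * ‖(Q * X * Y).trace‖ ≤ 4 * (Real.sqrt a * Real.sqrt b) := by
    nlinarith [cs]
  refine hcs4.trans ?_
  have hsa := Real.sq_sqrt ha
  have hsb := Real.sq_sqrt hb
  have hsan := Real.sqrt_nonneg a
  have hsbn := Real.sqrt_nonneg b
  have ht' : t * (1 / t) = 1 := by field_simp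
  have key : 2 * a ≤ x2 + y2 := by linarith
  nlinarith [sq_nonneg (t * Real.sqrt a - Real.sqrt b), mul_le_mul_of_nonneg_left key ht.le,
    mul_pos ht ht, ht.le]
end
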